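/- Write n = 6m + b with 0 ≤ b ≤ 5. Then the number of indices k with h_{n,k} ≠ 0 (the number of terms of H_n) equals m+2 if b = 4, and equals m+1 otherwise. -/

import Mathlib

open Polynomial

/-- The maximal cube polynomials `H n` of the matchable Lucas cubes. -/
noncomputable def H : ℕ → Polynomial ℤ
  | 0 => 1
  | 1 => X
  | 2 => 2 * X
  | 3 => 3 * X
  | 4 => X + 2 * X ^ 2
  | (n + 5) => X * H (n + 3) + X * H (n + 2)

lemma H_nonneg : ∀ n, ∀ k, 0 ≤ (H n).coeff k
  | 0, k => by rw [H]; simp [coeff_one]; positivity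
  | 1, k => by rw [H]; simp [coeff_X]; split <;> norm_num
  | 2, k => by rw [H]; simp [coeff_X]; split <;> norm_num
  | 3, k => by rw [H]; simp [coeff_X]; split <;> norm_num
  | 4, k => by rw [H]; simp [coeff_X, coeff_X_pow]; split <;> split <;> norm_num
  | (n+5), k => by
      rw [H]
      rcases k with _|k
      · simp
      · simp only [coeff_add, coeff_X_mul]
        exact add_nonneg (H_nonneg (n+3) k) (H_nonneg (n+2) k)

lemma H_support : ∀ n, (H (n+2)).support = Finset.Icc ((n+3)/3) ((n+2)/2)
  | 0 => by rw [H]; rw [show 2 * (X : Polynomial ℤ) = C 2 * X by simp]; rw [support_C_mul_X (by norm_num)]; decide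
  | 1 => by rw [H]; rw [show 3 * (X : Polynomial ℤ) = C 3 * X by simp]; rw [support_C_mul_X (by norm_num)]; decide
  | 2 => by
      rw [H]
      ext k
      simp only [mem_support_iff, coeff_add, coeff_X, Finset.mem_Icc]
      rw [show (2 * X ^ 2 : Polynomial ℤ) = C 2 * X ^ 2 by simp, coeff_C_mul, coeff_X_pow]
      rcases k with _|_|_|k <;> simp
  | (n+3) => by
      have h1 := H_support (n+1)
      have h0 := H_support n
      rw [show n+3+2 = (n+3)+2 from rfl, show H (n+5) = X * H (n+3) + X * H (n+2) by rw [H]]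
      ext k
      simp only [mem_support_iff, coeff_add, Finset.mem_Icc]
      rcases k with _|k
      · simp
      · rw [coeff_X_mul, coeff_X_mul]
        have e1 : (H (n+3)).coeff k ≠ 0 ↔ (n+4)/3 ≤ k ∧ k ≤ (n+3)/2 := by
          rw [← mem_support_iff, h1, Finset.mem_Icc]
        have e0 : (H (n+2)).coeff k ≠ 0 ↔ (n+3)/3 ≤ k ∧ k ≤ (n+2)/2 := by
          rw [← mem_support_iff, h0, Finset.mem_Icc]
        have p1 := H_nonneg (n+3) k
        have p0 := H_nonneg (n+2) k
        constructor
        · intro h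
          have : (H (n+3)).coeff k ≠ 0 ∨ (H (n+2)).coeff k ≠ 0 := by
            by_contra hc
            push_neg at hc
            rw [hc.1, hc.2] at h; simp at h
          rcases this with h' | h' <;> [rw [e1] at h'; rw [e0] at h'] <;> omega
        · intro h
          have : (H (n+3)).coeff k ≠ 0 ∨ (H (n+2)).coeff k ≠ 0 := by
            rw [e1, e0]; omega
          rcases this with h' | h'
          · have : 0 < (H (n+3)).coeff k := lt_of_le_of_ne p1 (Ne.symm h')
            positivity
          · have : 0 < (H (n+2)).coeff k := lt_of_le_of_ne p0 (Ne.symm h')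
            positivity

/-- The number of terms of `H n`, i.e. the number of indices `k` with nonzero
coefficient of `x^k` in `H n`. -/
theorem number_of_terms_of_H (m b : ℕ) (hb : b ≤ 5) :
    (H (6 * m + b)).support.card = if b = 4 then m + 2 else m + 1 := by
  rcases Nat.lt_or_ge (6 * m + b) 2 with h | h
  · have hm : m = 0 := by omega
    have hb2 : b < 2 := by omega
    subst hm
    interval_cases b <;> simp_all <;>
      first
      | (rw [show H 0 = 1 by rw [H], show (1:Polynomial ℤ) = C 1 by simp,
            support_C (by norm_num)]; rfl)
      | (rw [show H 1 = (X : Polynomial ℤ) by rw [H],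
            support_X]; rfl)
  · obtain ⟨n, hn⟩ : ∃ n, 6 * m + b = n + 2 := ⟨6 * m + b - 2, by omega⟩
    rw [hn, H_support n, Nat.card_Icc]
    interval_cases b <;> simp <;> omega
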